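/- Let K ⊂ 𝔥̂⁺_reg be a compact set and suppose there exists s > 0 with |(λ̂, a∨) - k_a| ≥ s for all affine roots a and all λ̂ ∈ K. Set D = 1 + (2/s) max_a |k_a|. Then the cocycle values satisfy the operator norm bound ‖J_w(λ̂)‖_M ≤ D^{l(w)} for every w ∈ Ŵ^Y and every λ̂ ∈ ∪_{w∈Ŵ^Y} wK, where ‖·‖_M is the operator norm on a unitary Ŵ^Y-module M. -/

import Mathlib

open Pointwise

set_option maxHeartbeats 1000000 in

/- Abstract setting: G = Ŵ^Y acts on the regular spectral parameters X = 𝔥̂⁺_reg and on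
the set Raff of affine roots; p a λ̂ is the pairing (λ̂, a∨), k the Ŵ^Y-invariant
multiplicity function, π the unitary representation of Ŵ^Y on M, and J the cocycle of
normalized intertwiners, given on a simple reflection s_a = sr a by
J_{s_a}(λ̂) = ((λ̂,a∨)π(s_a) + k_a)/((λ̂,a∨) - k_a) and on Ω by J_ω(λ̂) = π(ω).
Every w ∈ Ŵ^Y is a product of l(w) generators (simple reflections and elements of Ω). -/

/-- if |(λ̂,a∨) - k_a| ≥ s > 0 for all affine roots a and λ̂ in a compact
K ⊆ 𝔥̂⁺_reg, and D = 1 + (2/s)·max|k_a|, then ‖J_w(λ̂)‖ ≤ D^{l(w)} for all w ∈ Ŵ^Y and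
all λ̂ ∈ ⋃_{w} wK. -/
theorem stmt10 {X G Raff M : Type*} [TopologicalSpace X] [Group G] [MulAction G X] [MulAction G Raff]
    [NormedAddCommGroup M] [InnerProductSpace ℂ M]
    (π : G → M →L[ℂ] M) (hπunitary : ∀ w : G, ∀ m : M, ‖π w m‖ = ‖m‖)
    (hπ : ∀ w : G, ‖π w‖ ≤ 1)
    (p : Raff → X → ℂ) (hp : ∀ (a : Raff) (w : G) (x : X), p a (w • x) = p (w⁻¹ • a) x)
    (k : Raff → ℂ) (hk : ∀ (w : G) (a : Raff), k (w • a) = k a)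
    (kmax : ℝ) (hkmax : ∀ a : Raff, ‖k a‖ ≤ kmax) (hkm0 : 0 ≤ kmax)
    (F : Set Raff) (sr : Raff → G) (Ω : Set G)
    (J : G → X → M →L[ℂ] M)
    (hJ1 : ∀ x : X, J 1 x = 1)
    (hcoc : ∀ (u w : G) (x : X), J (u * w) x = J u (w • x) * J w x)
    (hJr : ∀ a ∈ F, ∀ x : X,
      J (sr a) x = (p a x - k a)⁻¹ • ((p a x) • π (sr a) + (k a) • (1 : M →L[ℂ] M)))
    (hJΩ : ∀ ω ∈ Ω, ∀ x : X, J ω x = π ω)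
    (l : G → ℕ)
    (hl : ∀ w : G, ∃ g : Fin (l w) → G,
      (∀ i, g i ∈ (sr '' F) ∪ Ω) ∧ w = (List.ofFn g).prod)
    (K : Set X) (hK : IsCompact K)
    (s : ℝ) (hs : 0 < s)
    (hsep : ∀ a : Raff, ∀ x ∈ K, s ≤ ‖p a x - k a‖)
    (D : ℝ) (hD : D = 1 + (2 / s) * kmax) :
    ∀ w : G, ∀ x ∈ ⋃ u : G, u • K, ‖J w x‖ ≤ D ^ (l w) := by
  set S : Set X := ⋃ u : G, u • K with hS
  have hD1 : 1 ≤ D := by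
    rw [hD]
    have : 0 ≤ (2 / s) * kmax := mul_nonneg (by positivity) hkm0
    linarith
  have hD0 : 0 ≤ D := le_trans zero_le_one hD1
  -- S is G-invariant
  have hinv : ∀ (w : G), ∀ x ∈ S, w • x ∈ S := by
    intro w x hx
    rcases Set.mem_iUnion.1 hx with ⟨u, hu⟩
    obtain ⟨y, hy, hxy⟩ := hu
    have hwx : w • x = (w * u) • y := by rw [← hxy]; simp [mul_smul]
    rw [hwx]
    exact Set.mem_iUnion.2 ⟨w * u, Set.smul_mem_smul_set hy⟩
  -- generator bound
  have hgen : ∀ g ∈ (sr '' F) ∪ Ω, ∀ x ∈ S, ‖J g x‖ ≤ D := by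
    intro g hg x hx
    rcases Set.mem_iUnion.1 hx with ⟨u, hu⟩
    obtain ⟨y, hy, hxy⟩ := hu
    rcases hg with hg | hg
    · rcases hg with ⟨a, haF, rfl⟩
      rw [hJr a haF]
      have hpe : p a x = p (u⁻¹ • a) y := by rw [← hxy]; exact hp a u y
      have hke : k a = k (u⁻¹ • a) := by rw [← hk u⁻¹ a]
      set b := u⁻¹ • a with hb
      have hsep' : s ≤ ‖p b y - k b‖ := hsep b y hy
      have ht0 : 0 < ‖p b y - k b‖ := lt_of_lt_of_le hs hsep'
      set t := ‖p b y - k b‖ with htdef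
      have hn1 : ‖(p a x) • π (sr a)‖ ≤ ‖p b y‖ := by
        calc ‖(p a x) • π (sr a)‖ ≤ ‖p a x‖ * ‖π (sr a)‖ := ContinuousLinearMap.opNorm_smul_le _ _
          _ ≤ ‖p a x‖ * 1 := mul_le_mul_of_nonneg_left (hπ _) (norm_nonneg _)
          _ = ‖p b y‖ := by rw [mul_one, hpe]
      have hn2 : ‖(k a) • (1 : M →L[ℂ] M)‖ ≤ ‖k b‖ := by
        calc ‖(k a) • (1 : M →L[ℂ] M)‖ ≤ ‖k a‖ * ‖(1 : M →L[ℂ] M)‖ := ContinuousLinearMap.opNorm_smul_le _ _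
          _ ≤ ‖k a‖ * 1 := mul_le_mul_of_nonneg_left ContinuousLinearMap.norm_id_le
              (norm_nonneg _)
          _ = ‖k b‖ := by rw [mul_one, hke]
      have hnc : ‖((p a x - k a)⁻¹ : ℂ)‖ = t⁻¹ := by
        rw [norm_inv, hpe, hke]
      have hA : ‖p b y‖ ≤ t + ‖k b‖ := by
        calc ‖p b y‖ = ‖(p b y - k b) + k b‖ := by ring_nf
          _ ≤ t + ‖k b‖ := norm_add_le _ _
      have hkb : ‖k b‖ ≤ kmax := hkmax b
      have h1 : ‖k b‖ * s ≤ t * kmax := by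
        calc ‖k b‖ * s = s * ‖k b‖ := mul_comm _ _
          _ ≤ t * kmax := mul_le_mul hsep' hkb (norm_nonneg _) (le_of_lt ht0)
      have h3 : ‖k b‖ ≤ t * kmax / s := by
        rw [le_div_iff₀ hs]; exact h1
      have key : ‖p b y‖ + ‖k b‖ ≤ (1 + 2 / s * kmax) * t := by
        have e : (1 + 2 / s * kmax) * t = t + 2 * (t * kmax / s) := by
          field_simp
        rw [e]; linarith
      calc ‖(p a x - k a)⁻¹ • ((p a x) • π (sr a) + (k a) • (1 : M →L[ℂ] M))‖
          ≤ ‖((p a x - k a)⁻¹ : ℂ)‖ * ‖(p a x) • π (sr a) + (k a) • (1 : M →L[ℂ] M)‖ :=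
            ContinuousLinearMap.opNorm_smul_le _ _
        _ ≤ t⁻¹ * (‖p b y‖ + ‖k b‖) := by
            rw [hnc]
            refine mul_le_mul_of_nonneg_left ?_ (by positivity)
            exact le_trans (norm_add_le _ _) (add_le_add hn1 hn2)
        _ ≤ D := by
            rw [hD, inv_mul_le_iff₀ ht0]
            calc ‖p b y‖ + ‖k b‖
                ≤ (1 + 2 / s * kmax) * t := key
              _ = t * (1 + 2 / s * kmax) := mul_comm _ _
    · rw [hJΩ g hg]
      exact le_trans (hπ g) hD1
  -- bound for products of generators
  have hlist : ∀ L : List G, (∀ g ∈ L, g ∈ (sr '' F) ∪ Ω) → ∀ x ∈ S,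
      ‖J L.prod x‖ ≤ D ^ L.length := by
    intro L
    induction L with
    | nil =>
      intro _ x hx
      simp only [List.prod_nil, List.length_nil, pow_zero, hJ1]
      exact ContinuousLinearMap.norm_id_le
    | cons g L ih =>
      intro hgen' x hx
      have h1 : J (g * L.prod) x = J g (L.prod • x) * J L.prod x := hcoc g L.prod x
      simp only [List.prod_cons, List.length_cons, h1, pow_succ]
      calc ‖J g (L.prod • x) * J L.prod x‖
          ≤ ‖J g (L.prod • x)‖ * ‖J L.prod x‖ := ContinuousLinearMap.opNorm_comp_le _ _
        _ ≤ D * D ^ L.length := by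
            apply mul_le_mul
            · exact hgen g (hgen' g List.mem_cons_self) _ (hinv L.prod x hx)
            · exact ih (fun g' hg' => hgen' g' (List.mem_cons_of_mem g hg')) x hx
            · exact norm_nonneg _
            · exact hD0
        _ = D ^ L.length * D := by ring
  intro w x hx
  rcases hl w with ⟨g, hg, hw⟩
  have hmem : ∀ a ∈ List.ofFn g, a ∈ (sr '' F) ∪ Ω := by
    intro a ha
    rcases List.mem_ofFn.1 ha with ⟨i, rfl⟩
    exact hg i
  have := hlist (List.ofFn g) hmem x hx
  rw [← hw] at this
  simpa [List.length_ofFn] using this
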